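/- For any fixed classifier h, any real number ⟦h⟧, any n ≥ 1, and any 0 < δ < 1, the probability over the draw of the i.i.d. training sample Z^n that |R_D(h) − R̂_D(h)| > φ_D(h, δ) is at most δ · 2^{−⟦h⟧}. -/

import Mathlib

open MeasureTheory ENNReal

/-- Symmetric deviation between two extended nonnegative reals. -/
noncomputable def edistE (a b : ℝ≥0∞) : ℝ≥0∞ := (a - b) ⊔ (b - a)

/-- The false discovery rate `R_D(h) = P(Y = 0 | h(X) = 1)`, equal to `∞` when
`P(h(X) = 1) = 0`. -/
noncomputable def RD {𝓧 : Type*} [MeasurableSpace 𝓧] (P : Measure (𝓧 × Bool))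
    (h : 𝓧 → Bool) : ℝ≥0∞ :=
  if 0 < P {z : 𝓧 × Bool | h z.1 = true} then
    P {z : 𝓧 × Bool | z.2 = false ∧ h z.1 = true} / P {z : 𝓧 × Bool | h z.1 = true}
  else ⊤

/-- The empirical number of discoveries `n_D(h, Zⁿ)`. -/
def nD {𝓧 : Type*} {n : ℕ} (h : 𝓧 → Bool) (ω : Fin n → 𝓧 × Bool) : ℕ :=
  (Finset.univ.filter fun i => h (ω i).1 = true).card

/-- The empirical false discovery rate `R̂_D(h)`, equal to `∞` when `n_D(h, Zⁿ) = 0`. -/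
noncomputable def RhatD {𝓧 : Type*} {n : ℕ} (h : 𝓧 → Bool) (ω : Fin n → 𝓧 × Bool) : ℝ≥0∞ :=
  if 0 < nD h ω then
    ((Finset.univ.filter fun i => (ω i).2 = false ∧ h (ω i).1 = true).card : ℝ≥0∞)
      / (nD h ω : ℝ≥0∞)
  else ⊤

/-- The penalty `√((⟦h⟧ log 2 + log(2/δ)) / (2 m))`, equal to `∞` when `m = 0`. -/
noncomputable def pen (c δ : ℝ) (m : ℕ) : ℝ≥0∞ :=
  if 0 < m then ENNReal.ofReal (Real.sqrt ((c * Real.log 2 + Real.log (2 / δ)) / (2 * m)))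
  else ⊤

/-! ### Auxiliary analytic lemmas (Hoeffding / Chernoff for the binomial) -/

section Analytic
open Real Finset

lemma bern_mgf (q t : ℝ) (hq0 : 0 ≤ q) (hq1 : q ≤ 1) (ht : 0 ≤ t) :
    1 - q + q * exp t ≤ exp (q * t + t ^ 2 / 8) := by
  have hA : ∀ s : ℝ, 0 < 1 - q + q * exp s := by
    intro s
    rcases lt_or_eq_of_le hq1 with h | h
    · have := mul_nonneg hq0 (exp_pos s).le; linarith
    · subst h; simpa using exp_pos s
  have hA' : ∀ s : ℝ, HasDerivAt (fun s => 1 - q + q * exp s) (q * exp s) s := by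
    intro s
    simpa using ((Real.hasDerivAt_exp s).const_mul q).const_add (1 - q)
  set g : ℝ → ℝ := fun s => q + s / 4 - q * exp s / (1 - q + q * exp s) with hgdef
  have hg : ∀ s : ℝ, HasDerivAt g
      (1 / 4 - (q * exp s * (1 - q + q * exp s) - q * exp s * (q * exp s)) /
        (1 - q + q * exp s) ^ 2) s := by
    intro s
    have h1 : HasDerivAt (fun s : ℝ => q * exp s) (q * exp s) s :=
      (Real.hasDerivAt_exp s).const_mul q
    have h2 : HasDerivAt (fun s : ℝ => q * exp s / (1 - q + q * exp s))
        ((q * exp s * (1 - q + q * exp s) - q * exp s * (q * exp s)) /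
          (1 - q + q * exp s) ^ 2) s := h1.div (hA' s) (hA s).ne'
    have h3 : HasDerivAt (fun s : ℝ => q + s / 4) (1 / 4) s := by
      simpa using ((hasDerivAt_id s).div_const 4).const_add q
    exact h3.sub h2
  have hgmono : Monotone g := by
    apply monotone_of_deriv_nonneg
    · exact fun s => (hg s).differentiableAt
    · intro s
      rw [(hg s).deriv]
      set A := 1 - q + q * exp s with hAdef
      set u := q * exp s with hudef
      have hApos : 0 < A := hA s
      have key : u * A - u * u ≤ 1 / 4 * A ^ 2 := by nlinarith [sq_nonneg (A - 2 * u)]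
      have : (u * A - u * u) / A ^ 2 ≤ 1 / 4 := by
        rw [div_le_iff₀ (by positivity)]; linarith
      linarith
  have hg0 : g 0 = 0 := by simp [hgdef]
  have hgnn : ∀ s : ℝ, 0 ≤ s → 0 ≤ g s := by
    intro s hs; rw [← hg0]; exact hgmono hs
  set f : ℝ → ℝ := fun s => q * s + s ^ 2 / 8 - Real.log (1 - q + q * exp s) with hfdef
  have hf : ∀ s : ℝ, HasDerivAt f (g s) s := by
    intro s
    have hlog : HasDerivAt (fun s : ℝ => Real.log (1 - q + q * exp s))
        (q * exp s / (1 - q + q * exp s)) s := (hA' s).log (hA s).ne'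
    have h1 : HasDerivAt (fun s : ℝ => q * s + s ^ 2 / 8) (q + 2 * s ^ 1 / 8) s := by
      have h2 : HasDerivAt (fun s : ℝ => q * s) q s := by
        simpa using (hasDerivAt_id s).const_mul q
      exact (h2.add ((hasDerivAt_pow 2 s).div_const 8)).congr_deriv (by norm_num)
    have := h1.sub hlog
    refine this.congr_deriv ?_
    simp [hgdef]; ring
  have hfmono : MonotoneOn f (Set.Ici (0 : ℝ)) := by
    apply monotoneOn_of_deriv_nonneg (convex_Ici 0)
    · exact (Differentiable.continuous fun s => (hf s).differentiableAt).continuousOn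
    · exact fun s _ => (hf s).differentiableAt.differentiableWithinAt
    · intro s hs
      rw [(hf s).deriv]
      exact hgnn s (le_of_lt (by simpa using hs))
  have hf0 : f 0 = 0 := by simp [hfdef]
  have hft : 0 ≤ f t := by
    rw [← hf0]; exact hfmono Set.self_mem_Ici (Set.mem_Ici.2 ht) ht
  have hlog_le : Real.log (1 - q + q * exp t) ≤ q * t + t ^ 2 / 8 := by
    simp only [hfdef] at hft; linarith
  calc 1 - q + q * exp t = exp (Real.log (1 - q + q * exp t)) := (Real.exp_log (hA t)).symm
    _ ≤ exp (q * t + t ^ 2 / 8) := exp_le_exp.2 hlog_le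

lemma chernoff_up (m : ℕ) (q ε : ℝ) (hq0 : 0 ≤ q) (hq1 : q ≤ 1) (hε : 0 ≤ ε) :
    ∑ k ∈ range (m + 1),
      (if (m : ℝ) * q + (m : ℝ) * ε < (k : ℝ) then
        (m.choose k : ℝ) * (q ^ k * (1 - q) ^ (m - k)) else 0)
      ≤ exp (-(2 * (m : ℝ) * ε ^ 2)) := by
  have h1q : 0 ≤ 1 - q := by linarith
  set M : ℝ := (m : ℝ) * q + (m : ℝ) * ε with hM
  calc ∑ k ∈ range (m + 1),
      (if M < (k : ℝ) then (m.choose k : ℝ) * (q ^ k * (1 - q) ^ (m - k)) else 0)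
      ≤ ∑ k ∈ range (m + 1),
        (m.choose k : ℝ) * (q ^ k * (1 - q) ^ (m - k)) * exp (4 * ε * ((k : ℝ) - M)) := by
        apply sum_le_sum
        intro k _
        split_ifs with h
        · have hge : (1 : ℝ) ≤ exp (4 * ε * ((k : ℝ) - M)) := by
            apply Real.one_le_exp
            have : (0:ℝ) ≤ (k : ℝ) - M := by linarith
            positivity
          nlinarith [mul_nonneg (mul_nonneg (Nat.cast_nonneg (m.choose k))
            (mul_nonneg (pow_nonneg hq0 k) (pow_nonneg h1q (m - k))))
            (le_of_lt (exp_pos (4 * ε * ((k : ℝ) - M))))]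
        · positivity
    _ = (∑ k ∈ range (m + 1), (q * exp (4 * ε)) ^ k * (1 - q) ^ (m - k) * (m.choose k : ℝ))
          * exp (-(4 * ε * M)) := by
        rw [sum_mul]
        apply sum_congr rfl
        intro k _
        rw [mul_pow, ← Real.exp_nat_mul]
        rw [show (4 : ℝ) * ε * ((k : ℝ) - M) = (k : ℝ) * (4 * ε) + (-(4 * ε * M)) by ring,
          Real.exp_add]
        ring
    _ = (q * exp (4 * ε) + (1 - q)) ^ m * exp (-(4 * ε * M)) := by rw [← add_pow]
    _ ≤ exp (q * (4 * ε) + (4 * ε) ^ 2 / 8) ^ m * exp (-(4 * ε * M)) := by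
        apply mul_le_mul_of_nonneg_right _ (exp_pos _).le
        apply pow_le_pow_left₀ (by positivity)
        have := bern_mgf q (4 * ε) hq0 hq1 (by positivity)
        linarith
    _ = exp (-(2 * (m : ℝ) * ε ^ 2)) := by
        rw [← Real.exp_nat_mul, ← Real.exp_add]
        congr 1
        rw [hM]; ring

lemma chernoff_low (m : ℕ) (q ε : ℝ) (hq0 : 0 ≤ q) (hq1 : q ≤ 1) (hε : 0 ≤ ε) :
    ∑ k ∈ range (m + 1),
      (if (k : ℝ) < (m : ℝ) * q - (m : ℝ) * ε then
        (m.choose k : ℝ) * (q ^ k * (1 - q) ^ (m - k)) else 0)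
      ≤ exp (-(2 * (m : ℝ) * ε ^ 2)) := by
  rw [← Finset.sum_range_reflect]
  have h := chernoff_up m (1 - q) ε (by linarith) (by linarith) hε
  refine le_trans (le_of_eq (sum_congr rfl ?_)) h
  intro k hk
  rw [mem_range, Nat.lt_succ_iff] at hk
  have h1 : m + 1 - 1 - k = m - k := by omega
  have h2 : ((m - k : ℕ) : ℝ) = (m : ℝ) - (k : ℝ) := by
    rw [Nat.cast_sub hk]
  have h3 : m - (m - k) = k := by omega
  have h4 : m.choose (m - k) = m.choose k := Nat.choose_symm hk
  rw [h1]
  by_cases hc : ((m - k : ℕ) : ℝ) < (m : ℝ) * q - (m : ℝ) * ε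
  · rw [if_pos hc, if_pos (by rw [h2] at hc; nlinarith [hc])]
    rw [h4, h3]
    ring_nf
  · rw [if_neg hc, if_neg (by intro hcon; apply hc; rw [h2]; nlinarith [hcon])]

lemma chernoff_abs (m : ℕ) (hm : 0 < m) (q ε : ℝ) (hq0 : 0 ≤ q) (hq1 : q ≤ 1)
    (hε : 0 ≤ ε) :
    ∑ k ∈ range (m + 1),
      (if ε < |q - (k : ℝ) / (m : ℝ)| then
        (m.choose k : ℝ) * (q ^ k * (1 - q) ^ (m - k)) else 0)
      ≤ 2 * exp (-(2 * (m : ℝ) * ε ^ 2)) := by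
  have hm0 : (0 : ℝ) < (m : ℝ) := by exact_mod_cast hm
  have h1q : 0 ≤ 1 - q := by linarith
  calc ∑ k ∈ range (m + 1),
      (if ε < |q - (k : ℝ) / (m : ℝ)| then
        (m.choose k : ℝ) * (q ^ k * (1 - q) ^ (m - k)) else 0)
      ≤ ∑ k ∈ range (m + 1),
        ((if (k : ℝ) < (m : ℝ) * q - (m : ℝ) * ε then
          (m.choose k : ℝ) * (q ^ k * (1 - q) ^ (m - k)) else 0) +
         (if (m : ℝ) * q + (m : ℝ) * ε < (k : ℝ) then
          (m.choose k : ℝ) * (q ^ k * (1 - q) ^ (m - k)) else 0)) := by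
        apply sum_le_sum
        intro k _
        set t := (m.choose k : ℝ) * (q ^ k * (1 - q) ^ (m - k)) with htdef
        have ht : (0:ℝ) ≤ t := by positivity
        have hl : (0:ℝ) ≤ (if (k : ℝ) < (m : ℝ) * q - (m : ℝ) * ε then t else 0) := by
          split_ifs <;> linarith
        have hu : (0:ℝ) ≤ (if (m : ℝ) * q + (m : ℝ) * ε < (k : ℝ) then t else 0) := by
          split_ifs <;> linarith
        by_cases h1 : ε < |q - (k : ℝ) / (m : ℝ)|
        · rw [if_pos h1]
          rcases lt_abs.mp h1 with h | h
          · have hc : (k : ℝ) < (m : ℝ) * q - (m : ℝ) * ε := by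
              have h' : (k : ℝ) / (m : ℝ) < q - ε := by linarith
              have := (div_lt_iff₀ hm0).mp h'
              nlinarith
            rw [if_pos hc]; linarith
          · have hc : (m : ℝ) * q + (m : ℝ) * ε < (k : ℝ) := by
              rw [neg_sub] at h
              have h' : q + ε < (k : ℝ) / (m : ℝ) := by linarith
              have := (lt_div_iff₀ hm0).mp h'
              nlinarith
            rw [if_pos hc]; linarith
        · rw [if_neg h1]; linarith
    _ = (∑ k ∈ range (m + 1),
        (if (k : ℝ) < (m : ℝ) * q - (m : ℝ) * ε then
          (m.choose k : ℝ) * (q ^ k * (1 - q) ^ (m - k)) else 0)) +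
        (∑ k ∈ range (m + 1),
         (if (m : ℝ) * q + (m : ℝ) * ε < (k : ℝ) then
          (m.choose k : ℝ) * (q ^ k * (1 - q) ^ (m - k)) else 0)) := sum_add_distrib
    _ ≤ exp (-(2 * (m : ℝ) * ε ^ 2)) + exp (-(2 * (m : ℝ) * ε ^ 2)) :=
        add_le_add (chernoff_low m q ε hq0 hq1 hε) (chernoff_up m q ε hq0 hq1 hε)
    _ = 2 * exp (-(2 * (m : ℝ) * ε ^ 2)) := by ring

end Analytic

/-! ### Auxiliary combinatorial lemmas -/

section Comb
open Finset

variable {n : ℕ}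

/-- The finset of admissible values at each coordinate, given the discovery set `S` and
the false-discovery set `T`. -/
def fibT (S T : Finset (Fin n)) : Fin n → Finset (Bool × Bool) := fun i =>
  if i ∈ T then {(true, false)} else if i ∈ S then {(true, true)}
  else ({(false, false), (false, true)} : Finset (Bool × Bool))

/-- The pair (discovery set, false-discovery set) of a sample of `(h(X), Y)` values. -/
def PhiF (ω' : Fin n → Bool × Bool) : Finset (Fin n) × Finset (Fin n) :=
  (Finset.univ.filter fun i => (ω' i).1 = true,
   Finset.univ.filter fun i => (ω' i).2 = false ∧ (ω' i).1 = true)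

lemma PhiF_sub (ω' : Fin n → Bool × Bool) : (PhiF ω').2 ⊆ (PhiF ω').1 := by
  intro i hi
  simp only [PhiF, mem_filter, mem_univ, true_and] at hi ⊢
  exact hi.2

lemma fiber_eq (S T : Finset (Fin n)) (hTS : T ⊆ S) :
    (Finset.univ.filter fun ω' : Fin n → Bool × Bool => PhiF ω' = (S, T)) =
      Fintype.piFinset (fibT S T) := by
  ext ω'
  simp only [mem_filter, mem_univ, true_and, Fintype.mem_piFinset, PhiF, Prod.mk.injEq]
  constructor
  · rintro ⟨hS, hT⟩ i
    have hSm : i ∈ S ↔ (ω' i).1 = true := by rw [← hS]; simp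
    have hTm : i ∈ T ↔ ((ω' i).2 = false ∧ (ω' i).1 = true) := by rw [← hT]; simp
    by_cases hiT : i ∈ T
    · obtain ⟨h2, h1⟩ := hTm.mp hiT
      simp [fibT, hiT, Prod.ext_iff, h1, h2]
    · by_cases hiS : i ∈ S
      · have h1 := hSm.mp hiS
        have h2 : (ω' i).2 = true := by
          cases e : (ω' i).2
          · exact absurd (hTm.mpr ⟨e, h1⟩) hiT
          · rfl
        simp [fibT, hiT, hiS, Prod.ext_iff, h1, h2]
      · have h1 : (ω' i).1 = false := by
          cases e : (ω' i).1
          · rfl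
          · exact absurd (hSm.mpr e) hiS
        simp only [fibT, if_neg hiT, if_neg hiS, mem_insert, mem_singleton, Prod.ext_iff]
        cases e : (ω' i).2
        · exact Or.inl ⟨h1, rfl⟩
        · exact Or.inr ⟨h1, rfl⟩
  · intro hpi
    have hfst : ∀ i, ((ω' i).1 = true ↔ i ∈ S) := by
      intro i
      have := hpi i
      by_cases hiT : i ∈ T
      · simp only [fibT, if_pos hiT, mem_singleton] at this
        simp [this, hTS hiT]
      · by_cases hiS : i ∈ S
        · simp only [fibT, if_neg hiT, if_pos hiS, mem_singleton] at this
          simp [this, hiS]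
        · simp only [fibT, if_neg hiT, if_neg hiS, mem_insert, mem_singleton] at this
          rcases this with e | e <;> simp [e, hiS]
    have hsnd : ∀ i, (((ω' i).2 = false ∧ (ω' i).1 = true) ↔ i ∈ T) := by
      intro i
      have := hpi i
      by_cases hiT : i ∈ T
      · simp only [fibT, if_pos hiT, mem_singleton] at this
        simp [this, hiT]
      · by_cases hiS : i ∈ S
        · simp only [fibT, if_neg hiT, if_pos hiS, mem_singleton] at this
          simp [this, hiT]
        · simp only [fibT, if_neg hiT, if_neg hiS, mem_insert, mem_singleton] at this
          rcases this with e | e <;> simp [e, hiT]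
    constructor
    · ext i; simpa using hfst i
    · ext i; simpa using hsnd i

lemma fiber_empty (S T : Finset (Fin n)) (hTS : ¬ T ⊆ S) :
    (Finset.univ.filter fun ω' : Fin n → Bool × Bool => PhiF ω' = (S, T)) = ∅ := by
  rw [Finset.filter_eq_empty_iff]
  intro ω' _ hc
  apply hTS
  have := PhiF_sub ω'
  rw [hc] at this
  exact this

lemma fiber_sum (w : Bool × Bool → ℝ≥0∞) (S T : Finset (Fin n)) (hTS : T ⊆ S) :
    ∑ ω' ∈ Finset.univ.filter (fun ω' : Fin n → Bool × Bool => PhiF ω' = (S, T)),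
        ∏ i, w (ω' i) =
      w (true, false) ^ T.card * w (true, true) ^ (S.card - T.card) *
        (w (false, false) + w (false, true)) ^ (n - S.card) := by
  rw [fiber_eq S T hTS, ← Finset.prod_univ_sum]
  set f : Fin n → ℝ≥0∞ := fun i =>
    if i ∈ T then w (true, false) else if i ∈ S then w (true, true)
    else (w (false, false) + w (false, true)) with hf
  have hval : ∀ i ∈ (Finset.univ : Finset (Fin n)), (∑ e ∈ fibT S T i, w e) = f i := by
    intro i _
    by_cases hiT : i ∈ T
    · simp [fibT, hf, hiT]
    · by_cases hiS : i ∈ S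
      · simp [fibT, hf, hiT, hiS]
      · simp [fibT, hf, hiT, hiS]
  rw [Finset.prod_congr rfl hval]
  have e0 : (∏ i ∈ Finset.univ \ S, f i) * ∏ i ∈ S, f i = ∏ i, f i :=
    Finset.prod_sdiff (Finset.subset_univ S)
  have e1 : ∏ i ∈ Finset.univ \ S, f i
      = (w (false, false) + w (false, true)) ^ (n - S.card) := by
    rw [Finset.prod_congr rfl (fun i hi => ?_), Finset.prod_const, Finset.card_sdiff_of_subset
      (Finset.subset_univ S), Finset.card_univ, Fintype.card_fin]
    rw [Finset.mem_sdiff] at hi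
    rw [hf]
    simp only
    rw [if_neg (fun hiT => hi.2 (hTS hiT)), if_neg hi.2]
  have e2 : (∏ i ∈ S \ T, f i) * ∏ i ∈ T, f i = ∏ i ∈ S, f i := Finset.prod_sdiff hTS
  have e3 : ∏ i ∈ S \ T, f i = w (true, true) ^ (S.card - T.card) := by
    rw [Finset.prod_congr rfl (fun i hi => ?_), Finset.prod_const, Finset.card_sdiff_of_subset hTS]
    rw [Finset.mem_sdiff] at hi
    rw [hf]
    simp only
    rw [if_neg hi.2, if_pos hi.1]
  have e4 : ∏ i ∈ T, f i = w (true, false) ^ T.card := by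
    rw [Finset.prod_congr rfl (fun i hi => ?_), Finset.prod_const]
    rw [hf]; simp only; rw [if_pos hi]
  rw [← e0, e1, ← e2, e3, e4]
  ring

end Comb

/-! ### ENNReal helper -/

lemma edistE_eq_ofReal {x y : ℝ≥0∞} (hx : x ≠ ⊤) (hy : y ≠ ⊤) :
    edistE x y = ENNReal.ofReal |x.toReal - y.toReal| := by
  rw [edistE]
  conv_lhs => rw [← ENNReal.ofReal_toReal hx, ← ENNReal.ofReal_toReal hy]
  rw [← ENNReal.ofReal_sub _ ENNReal.toReal_nonneg,
    ← ENNReal.ofReal_sub _ ENNReal.toReal_nonneg]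
  rcases le_total x.toReal y.toReal with hc | hc
  · rw [sup_eq_right.mpr (ENNReal.ofReal_le_ofReal (by linarith)), abs_sub_comm,
      abs_of_nonneg (by linarith)]
  · rw [sup_eq_left.mpr (ENNReal.ofReal_le_ofReal (by linarith)),
      abs_of_nonneg (by linarith)]

/-- The "bad event" condition as a function of the counts. -/
noncomputable def badC (c δ : ℝ) (x : ℝ≥0∞) (m k : ℕ) : Prop :=
  pen c δ m < edistE x (if 0 < m then (k : ℝ≥0∞) / (m : ℝ≥0∞) else ⊤)

open Finset in
open scoped Classical in
/-- Conditional Chernoff bound, in `ℝ≥0∞` form. -/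
lemma inner_bound (c δ : ℝ) (hδ0 : 0 < δ) (hδ1 : δ < 1)
    (hL : 0 < c * Real.log 2 + Real.log (2 / δ))
    (a b : ℝ≥0∞) (x : ℝ≥0∞) (hab1 : a + b ≤ 1)
    (hx : a + b ≠ 0 → x = a / (a + b)) (m : ℕ) :
    ∑ k ∈ Finset.range (m + 1), (m.choose k : ℝ≥0∞) *
        (if badC c δ x m k then a ^ k * b ^ (m - k) else 0)
      ≤ (a + b) ^ m * ENNReal.ofReal (2 * Real.exp
          (-(c * Real.log 2 + Real.log (2 / δ)))) := by
  classical
  set L : ℝ := c * Real.log 2 + Real.log (2 / δ) with hLdef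
  rcases Nat.eq_zero_or_pos m with rfl | hm
  · have hbad0 : ¬ badC c δ x 0 0 := by
      rw [badC, pen, if_neg (lt_irrefl 0)]
      exact not_top_lt
    have hz : ∀ k ∈ Finset.range 1, (Nat.choose 0 k : ℝ≥0∞) *
        (if badC c δ x 0 k then a ^ k * b ^ (0 - k) else 0) = 0 := by
      intro k hk
      rw [Finset.mem_range, Nat.lt_one_iff] at hk
      subst hk
      rw [if_neg hbad0, mul_zero]
    rw [Finset.sum_eq_zero hz]
    exact zero_le
  · by_cases hp : a + b = 0
    · obtain ⟨ha, hb⟩ := add_eq_zero.mp hp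
      refine le_trans (le_of_eq (Finset.sum_eq_zero ?_)) zero_le
      intro k hk
      rcases Nat.eq_zero_or_pos k with rfl | hk0
      · rw [hb, zero_pow (by omega : m - 0 ≠ 0)]
        simp
      · rw [ha, zero_pow hk0.ne']
        simp
    · have hppos : 0 < a + b := pos_iff_ne_zero.mpr hp
      have habt : a + b ≠ ⊤ := ne_top_of_le_ne_top ENNReal.one_ne_top hab1
      have hat : a ≠ ⊤ := ne_top_of_le_ne_top habt le_self_add
      have hbt : b ≠ ⊤ := ne_top_of_le_ne_top habt le_add_self
      set pr := (a + b).toReal with hprdef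
      set ar := a.toReal with hardef
      set br := b.toReal with hbrdef
      have hprpos : 0 < pr := ENNReal.toReal_pos hp habt
      have hsum : ar + br = pr := by
        rw [hprdef, ENNReal.toReal_add hat hbt]
      have har0 : 0 ≤ ar := ENNReal.toReal_nonneg
      have hbr0 : 0 ≤ br := ENNReal.toReal_nonneg
      set q := ar / pr with hqdef
      have hq0 : 0 ≤ q := by positivity
      have hq1 : q ≤ 1 := by rw [hqdef, div_le_one hprpos]; linarith
      have hxval : x = a / (a + b) := hx hp
      have hxt : x ≠ ⊤ := by
        rw [hxval]; exact (ENNReal.div_lt_top hat hp).ne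
      have hxq : x.toReal = q := by rw [hxval, ENNReal.toReal_div, hqdef]
      set ε := Real.sqrt (L / (2 * m)) with hεdef
      have hε0 : 0 ≤ ε := Real.sqrt_nonneg _
      have hmR : (0:ℝ) < (m:ℝ) := by exact_mod_cast hm
      have hpen : pen c δ m = ENNReal.ofReal ε := by
        rw [pen, if_pos hm, hεdef, hLdef]
      have hLm : 2 * (m:ℝ) * ε ^ 2 = L := by
        rw [hεdef, Real.sq_sqrt (by positivity)]
        field_simp
      have haq : a = ENNReal.ofReal (pr * q) := by
        rw [show pr * q = ar by rw [hqdef]; field_simp]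
        exact (ENNReal.ofReal_toReal hat).symm
      have hbq : b = ENNReal.ofReal (pr * (1 - q)) := by
        rw [show pr * (1 - q) = br by rw [hqdef]; field_simp; linarith]
        exact (ENNReal.ofReal_toReal hbt).symm
      have hbadimp : ∀ k : ℕ, badC c δ x m k → ε < |q - (k:ℝ)/(m:ℝ)| := by
        intro k hbk
        rw [badC, if_pos hm, hpen] at hbk
        have hyt : ((k:ℝ≥0∞)/(m:ℝ≥0∞)) ≠ ⊤ :=
          (ENNReal.div_lt_top (ENNReal.natCast_ne_top k)
            (by exact_mod_cast hm.ne' : (m:ℝ≥0∞) ≠ 0)).ne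
        rw [edistE_eq_ofReal hxt hyt] at hbk
        have := (ENNReal.ofReal_lt_ofReal_iff_of_nonneg hε0).mp hbk
        rwa [hxq, ENNReal.toReal_div, ENNReal.toReal_natCast, ENNReal.toReal_natCast] at this
      calc ∑ k ∈ Finset.range (m + 1), (m.choose k : ℝ≥0∞) *
            (if badC c δ x m k then a ^ k * b ^ (m - k) else 0)
          ≤ ∑ k ∈ Finset.range (m + 1), (m.choose k : ℝ≥0∞) *
            (if ε < |q - (k:ℝ)/(m:ℝ)| then a ^ k * b ^ (m - k) else 0) := by
            apply Finset.sum_le_sum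
            intro k _
            apply mul_le_mul_right
            split_ifs with h1 h2
            · exact le_rfl
            · exact absurd (hbadimp k h1) h2
            · exact zero_le
            · exact le_rfl
        _ = ENNReal.ofReal (∑ k ∈ Finset.range (m + 1), pr ^ m *
              (if ε < |q - (k:ℝ)/(m:ℝ)| then
                (m.choose k : ℝ) * (q ^ k * (1 - q) ^ (m - k)) else 0)) := by
            have h1q : (0:ℝ) ≤ 1 - q := by linarith
            rw [ENNReal.ofReal_sum_of_nonneg (fun k _ => ?_)]
            swap
            · refine mul_nonneg (by positivity) ?_
              split_ifs
              · exact mul_nonneg (Nat.cast_nonneg _)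
                  (mul_nonneg (pow_nonneg hq0 _) (pow_nonneg h1q _))
              · exact le_rfl
            apply Finset.sum_congr rfl
            intro k hk
            rw [Finset.mem_range, Nat.lt_succ_iff] at hk
            by_cases hC : ε < |q - (k:ℝ)/(m:ℝ)|
            · rw [if_pos hC, if_pos hC, haq, hbq,
                ← ENNReal.ofReal_pow (mul_nonneg hprpos.le hq0),
                ← ENNReal.ofReal_pow (mul_nonneg hprpos.le h1q),
                ← ENNReal.ofReal_mul (pow_nonneg (mul_nonneg hprpos.le hq0) k),
                ← ENNReal.ofReal_natCast (m.choose k),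
                ← ENNReal.ofReal_mul (Nat.cast_nonneg _)]
              congr 1
              rw [mul_pow, mul_pow, show pr ^ k * q ^ k * (pr ^ (m-k) * (1-q) ^ (m-k))
                  = (pr ^ k * pr ^ (m-k)) * (q ^ k * (1-q) ^ (m-k)) by ring,
                ← pow_add, Nat.add_sub_cancel' hk]
              ring
            · rw [if_neg hC, if_neg hC]
              simp
        _ ≤ ENNReal.ofReal (pr ^ m * (2 * Real.exp (-(2 * (m:ℝ) * ε ^ 2)))) := by
            apply ENNReal.ofReal_le_ofReal
            rw [← Finset.mul_sum]
            exact mul_le_mul_of_nonneg_left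
              (chernoff_abs m hm q ε hq0 hq1 hε0) (by positivity)
        _ = (a + b) ^ m * ENNReal.ofReal (2 * Real.exp (-L)) := by
            rw [hLm, ENNReal.ofReal_mul (by positivity),
              ENNReal.ofReal_pow hprpos.le, hprdef, ENNReal.ofReal_toReal habt]

/-- **Single-classifier deviation bound.** For any fixed classifier `h`, any real
codelength `c = ⟦h⟧`, any `n ≥ 1` and any `0 < δ < 1`, the probability over the draw of an
i.i.d. sample of size `n` that `|R_D(h) - R̂_D(h)| > φ_D(h, δ)` is at most `δ · 2^(-⟦h⟧)`.
(When `n_D = 0` both the deviation and the penalty are `∞`, so the bad event does not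
occur.) -/
theorem fdr_single_deviation_bound
    {𝓧 : Type*} [MeasurableSpace 𝓧] (P : Measure (𝓧 × Bool)) [IsProbabilityMeasure P]
    (h : 𝓧 → Bool) (hmeas : Measurable h) (c : ℝ)
    (n : ℕ) (hn : 1 ≤ n) (δ : ℝ) (hδ0 : 0 < δ) (hδ1 : δ < 1) :
    (Measure.pi fun _ : Fin n => P)
        {ω | pen c δ (nD h ω) < edistE (RD P h) (RhatD h ω)} ≤
      ENNReal.ofReal δ * (2 : ℝ≥0∞) ^ (-c) := by
  classical
  have hδ2 : (0:ℝ) < 2 / δ := by positivity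
  have hRHS : ENNReal.ofReal δ * (2:ℝ≥0∞) ^ (-c) = ENNReal.ofReal (δ * (2:ℝ) ^ (-c)) := by
    rw [ENNReal.ofReal_mul hδ0.le]
    congr 1
    rw [show (2:ℝ≥0∞) = ENNReal.ofReal (2:ℝ) by simp]
    exact ENNReal.ofReal_rpow_of_pos (by norm_num)
  rcases le_or_gt (c * Real.log 2 + Real.log (2/δ)) 0 with hL | hL
  · -- trivial case: the right-hand side is at least `1`
    refine le_trans prob_le_one ?_
    rw [hRHS]
    have h2c : 2/δ ≤ (2:ℝ) ^ (-c) := by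
      calc 2/δ = Real.exp (Real.log (2/δ)) := (Real.exp_log hδ2).symm
        _ ≤ Real.exp (Real.log 2 * (-c)) := Real.exp_le_exp.2 (by nlinarith [hL])
        _ = (2:ℝ) ^ (-c) := (Real.rpow_def_of_pos (by norm_num) _).symm
    have hd2 : δ * (2/δ) = 2 := by field_simp
    refine ENNReal.one_le_ofReal.mpr ?_
    nlinarith [mul_le_mul_of_nonneg_left h2c hδ0.le]
  · -- main case
    set F : 𝓧 × Bool → Bool × Bool := fun z => (h z.1, z.2) with hFdef
    have hFm : Measurable F := (hmeas.comp measurable_fst).prodMk measurable_snd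
    set w : Bool × Bool → ℝ≥0∞ := fun e => P (F ⁻¹' {e}) with hwdef
    set G : (Fin n → 𝓧 × Bool) → Fin n → Bool × Bool := fun ω i => F (ω i) with hGdef
    -- identification of the bad event through `G`
    have hkey : ∀ ω : Fin n → 𝓧 × Bool,
        (pen c δ (nD h ω) < edistE (RD P h) (RhatD h ω)) ↔
        badC c δ (RD P h) (PhiF (G ω)).1.card (PhiF (G ω)).2.card := by
      intro ω
      have h1 : nD h ω = (PhiF (G ω)).1.card := rfl
      have h2 : (Finset.univ.filter fun i => (ω i).2 = false ∧ h (ω i).1 = true).card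
          = (PhiF (G ω)).2.card := rfl
      rw [RhatD, badC, h1, h2]
    set BF : Finset (Fin n → Bool × Bool) := Finset.univ.filter
      (fun ω' => badC c δ (RD P h) (PhiF ω').1.card (PhiF ω').2.card) with hBFdef
    have hGpre : ∀ ω' : Fin n → Bool × Bool,
        G ⁻¹' {ω'} = Set.pi Set.univ (fun i => F ⁻¹' {ω' i}) := by
      intro ω'
      ext ω
      simp [hGdef, funext_iff, Set.mem_pi]
    have hset : {ω | pen c δ (nD h ω) < edistE (RD P h) (RhatD h ω)}
        = ⋃ ω' ∈ BF, G ⁻¹' {ω'} := by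
      ext ω
      simp only [Set.mem_setOf_eq, Set.mem_iUnion, Set.mem_preimage, Set.mem_singleton_iff,
        hBFdef, Finset.mem_filter, Finset.mem_univ, true_and, exists_prop]
      rw [hkey ω]
      constructor
      · intro hb
        exact ⟨G ω, hb, rfl⟩
      · rintro ⟨ω', hb, he⟩
        rw [he]
        exact hb
    have hmeas' : ∀ ω' ∈ BF, MeasurableSet (G ⁻¹' {ω'}) := by
      intro ω' _
      rw [hGpre ω']
      exact MeasurableSet.univ_pi (fun i => hFm (measurableSet_singleton _))
    have hdisj : (BF : Set (Fin n → Bool × Bool)).PairwiseDisjoint (fun ω' => G ⁻¹' {ω'}) := by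
      intro x _ y _ hxy
      exact Disjoint.preimage G (Set.disjoint_singleton.mpr hxy)
    rw [hset, measure_biUnion_finset hdisj hmeas']
    have hsing : ∀ ω' ∈ BF, (Measure.pi fun _ : Fin n => P) (G ⁻¹' {ω'}) = ∏ i, w (ω' i) := by
      intro ω' _
      rw [hGpre ω', Measure.pi_pi]
    rw [Finset.sum_congr rfl hsing]
    -- basic facts about the weights
    have hwp : w (true, false) + w (true, true) = P {z : 𝓧 × Bool | h z.1 = true} := by
      have hU : {z : 𝓧 × Bool | h z.1 = true}
          = F ⁻¹' {(true, false)} ∪ F ⁻¹' {(true, true)} := by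
        ext z
        simp only [Set.mem_union, Set.mem_preimage, Set.mem_singleton_iff, hFdef,
          Prod.mk.injEq, Set.mem_setOf_eq]
        cases e : z.2 <;> simp [e]
      have hd : Disjoint (F ⁻¹' {((true : Bool), (false : Bool))})
          (F ⁻¹' {((true : Bool), (true : Bool))}) := by
        rw [Set.disjoint_left]
        rintro z h1 h2
        simp only [Set.mem_preimage, Set.mem_singleton_iff] at h1 h2
        rw [h1] at h2
        simp at h2
      rw [hwdef]
      simp only
      rw [hU, measure_union hd (hFm (measurableSet_singleton _))]
    have hwa : w (true, false) = P {z : 𝓧 × Bool | z.2 = false ∧ h z.1 = true} := by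
      have hU : F ⁻¹' {((true : Bool), (false : Bool))}
          = {z : 𝓧 × Bool | z.2 = false ∧ h z.1 = true} := by
        ext z
        simp only [Set.mem_preimage, Set.mem_singleton_iff, hFdef, Prod.mk.injEq,
          Set.mem_setOf_eq]
        tauto
      rw [hwdef]
      simp only
      rw [hU]
    have hab1 : w (true, false) + w (true, true) ≤ 1 := by
      rw [hwp]; exact prob_le_one
    have hxRD : w (true, false) + w (true, true) ≠ 0 →
        RD P h = w (true, false) / (w (true, false) + w (true, true)) := by
      intro hne
      rw [RD, if_pos (by rw [← hwp]; exact pos_iff_ne_zero.mpr hne), ← hwa, ← hwp]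
    have htot : (w (true, false) + w (true, true)) + (w (false, false) + w (false, true))
        = 1 := by
      have hcov : (Set.univ : Set (𝓧 × Bool)) = ⋃ e ∈ (Finset.univ : Finset (Bool × Bool)),
          F ⁻¹' {e} := by
        ext z
        simp
      have hd : ((Finset.univ : Finset (Bool × Bool)) : Set (Bool × Bool)).PairwiseDisjoint
          (fun e => F ⁻¹' {e}) := by
        intro x _ y _ hxy
        exact Disjoint.preimage F (Set.disjoint_singleton.mpr hxy)
      have := measure_biUnion_finset (μ := P) hd
        (fun e _ => hFm (measurableSet_singleton (α := Bool × Bool) e))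
      rw [← hcov, measure_univ] at this
      rw [hwdef]
      simp only
      rw [this, Fintype.sum_prod_type, Fintype.sum_bool]
      simp [Fintype.sum_bool]
      ring
    -- rewrite the sum fiberwise
    calc ∑ ω' ∈ BF, ∏ i, w (ω' i)
        = ∑ ω' : Fin n → Bool × Bool,
            (if badC c δ (RD P h) (PhiF ω').1.card (PhiF ω').2.card then ∏ i, w (ω' i)
             else 0) := by
          rw [hBFdef, Finset.sum_filter]
      _ = ∑ pr : Finset (Fin n) × Finset (Fin n),
            ∑ ω' ∈ Finset.univ.filter (fun ω' => PhiF ω' = pr),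
            (if badC c δ (RD P h) (PhiF ω').1.card (PhiF ω').2.card then ∏ i, w (ω' i)
             else 0) := (Finset.sum_fiberwise _ PhiF _).symm
      _ = ∑ pr : Finset (Fin n) × Finset (Fin n),
            (if badC c δ (RD P h) pr.1.card pr.2.card then
              ∑ ω' ∈ Finset.univ.filter (fun ω' => PhiF ω' = pr), ∏ i, w (ω' i)
             else 0) := by
          apply Finset.sum_congr rfl
          intro pr _
          by_cases hb : badC c δ (RD P h) pr.1.card pr.2.card
          · rw [if_pos hb]
            apply Finset.sum_congr rfl
            intro ω' hω'
            rw [(Finset.mem_filter.mp hω').2, if_pos hb]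
          · rw [if_neg hb]
            apply Finset.sum_eq_zero
            intro ω' hω'
            rw [(Finset.mem_filter.mp hω').2, if_neg hb]
      _ = ∑ S : Finset (Fin n), ∑ T : Finset (Fin n),
            (if badC c δ (RD P h) S.card T.card then
              ∑ ω' ∈ Finset.univ.filter (fun ω' => PhiF ω' = (S, T)), ∏ i, w (ω' i)
             else 0) :=
          Fintype.sum_prod_type (fun pr : Finset (Fin n) × Finset (Fin n) =>
            if badC c δ (RD P h) pr.1.card pr.2.card then
              ∑ ω' ∈ Finset.univ.filter (fun ω' => PhiF ω' = pr), ∏ i, w (ω' i)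
            else 0)
      _ = ∑ S : Finset (Fin n), ∑ T ∈ S.powerset,
            (if badC c δ (RD P h) S.card T.card then
              w (true, false) ^ T.card * w (true, true) ^ (S.card - T.card) *
                (w (false, false) + w (false, true)) ^ (n - S.card)
             else 0) := by
          apply Finset.sum_congr rfl
          intro S _
          rw [← Finset.sum_subset (Finset.subset_univ S.powerset) ?_]
          · apply Finset.sum_congr rfl
            intro T hT
            rw [fiber_sum w S T (Finset.mem_powerset.mp hT)]
          · intro T _ hT
            rw [fiber_empty S T (fun hc => hT (Finset.mem_powerset.mpr hc))]
            simp
      _ = ∑ S : Finset (Fin n), (w (false, false) + w (false, true)) ^ (n - S.card) *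
            ∑ k ∈ Finset.range (S.card + 1), (S.card.choose k : ℝ≥0∞) *
              (if badC c δ (RD P h) S.card k then
                w (true, false) ^ k * w (true, true) ^ (S.card - k) else 0) := by
          apply Finset.sum_congr rfl
          intro S _
          rw [Finset.sum_powerset_apply_card (fun k =>
            if badC c δ (RD P h) S.card k then
              w (true, false) ^ k * w (true, true) ^ (S.card - k) *
                (w (false, false) + w (false, true)) ^ (n - S.card) else 0),
            Finset.mul_sum]
          apply Finset.sum_congr rfl
          intro k _
          rw [nsmul_eq_mul]
          by_cases hb : badC c δ (RD P h) S.card k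
          · rw [if_pos hb, if_pos hb]; ring
          · rw [if_neg hb, if_neg hb]; simp
      _ ≤ ∑ S : Finset (Fin n), (w (false, false) + w (false, true)) ^ (n - S.card) *
            ((w (true, false) + w (true, true)) ^ S.card *
              ENNReal.ofReal (2 * Real.exp (-(c * Real.log 2 + Real.log (2/δ))))) := by
          apply Finset.sum_le_sum
          intro S _
          exact mul_le_mul_right
            (inner_bound c δ hδ0 hδ1 hL (w (true, false)) (w (true, true)) (RD P h)
              hab1 hxRD S.card) _
      _ = ENNReal.ofReal (2 * Real.exp (-(c * Real.log 2 + Real.log (2/δ)))) *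
            ∑ S : Finset (Fin n), (w (true, false) + w (true, true)) ^ S.card *
              (w (false, false) + w (false, true)) ^ (n - S.card) := by
          rw [Finset.mul_sum]
          apply Finset.sum_congr rfl
          intro S _
          ring
      _ = ENNReal.ofReal (2 * Real.exp (-(c * Real.log 2 + Real.log (2/δ)))) *
            ((w (true, false) + w (true, true)) +
              (w (false, false) + w (false, true))) ^ n := by
          congr 1
          rw [show (Finset.univ : Finset (Finset (Fin n)))
              = (Finset.univ : Finset (Fin n)).powerset from Finset.powerset_univ.symm,
            Finset.sum_powerset_apply_card (fun m =>
              (w (true, false) + w (true, true)) ^ m *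
                (w (false, false) + w (false, true)) ^ (n - m)),
            Finset.card_univ, Fintype.card_fin, add_pow]
          apply Finset.sum_congr rfl
          intro k _
          rw [nsmul_eq_mul]
          ring
      _ = ENNReal.ofReal δ * (2:ℝ≥0∞) ^ (-c) := by
          rw [htot, one_pow, mul_one, hRHS]
          congr 1
          have e1 : Real.exp (-(c * Real.log 2)) = (2:ℝ) ^ (-c) := by
            rw [Real.rpow_def_of_pos (by norm_num : (0:ℝ) < 2)]
            congr 1
            ring
          have e2 : Real.exp (-(Real.log (2/δ))) = δ/2 := by
            rw [Real.exp_neg, Real.exp_log hδ2, inv_div]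
          calc 2 * Real.exp (-(c * Real.log 2 + Real.log (2/δ)))
              = 2 * (Real.exp (-(c * Real.log 2)) * Real.exp (-(Real.log (2/δ)))) := by
                rw [← Real.exp_add]
                congr 1
                ring
            _ = 2 * ((2:ℝ) ^ (-c) * (δ/2)) := by rw [e1, e2]
            _ = δ * (2:ℝ) ^ (-c) := by ring
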